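/- The distance in L¹(S¹, dx/(2π)) from the sawtooth function J₁ to the space of trigonometric polynomials of degree ≤ k−1 equals π/(2k). -/

import Mathlib

open Real MeasureTheory intervalIntegral

/-- The 2π-periodic sawtooth: `J₁(x) = x` for `x ∈ (−π, π)` and `J₁(π) = 0`. -/
noncomputable def J1fun (x : ℝ) : ℝ :=
  if x - 2 * π * round (x / (2 * π)) = -π then 0 else x - 2 * π * round (x / (2 * π))

/-- A real trigonometric polynomial of degree at most `n`. -/
def IsTrigPoly (n : ℕ) (p : ℝ → ℝ) : Prop :=
  ∃ a b : ℕ → ℝ, ∀ x : ℝ,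
    p x = ∑ j ∈ Finset.range (n + 1), (a j * Real.cos (j * x) + b j * Real.sin (j * x))

namespace SawtoothAux

noncomputable def nodeP (k i : ℕ) : ℝ := -π + i * (π / k)

noncomputable def cstar (k j : ℕ) : ℝ :=
  (2 * π / (k : ℝ) ^ 2) * ∑ i ∈ Finset.range k, (i : ℝ) * Real.sin (i * j * π / k)

noncomputable def pstar (k : ℕ) (x : ℝ) : ℝ :=
  ∑ j ∈ Finset.range k, cstar k j * Real.sin (j * x)

noncomputable def Efun (k : ℕ) (x : ℝ) : ℝ := x - pstar k x

variable {k : ℕ}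

lemma nodeP_zero : nodeP k 0 = -π := by simp [nodeP]

lemma nodeP_last (hk : 1 ≤ k) : nodeP k (2 * k) = π := by
  have hkR : (k : ℝ) ≠ 0 := Nat.cast_ne_zero.mpr (by omega)
  rw [nodeP]; push_cast; field_simp; ring

lemma nodeP_lt (hk : 1 ≤ k) {i j : ℕ} (hij : i < j) : nodeP k i < nodeP k j := by
  have hkR : (0 : ℝ) < (k : ℝ) := by positivity
  have : (0:ℝ) < π / k := by positivity
  have hij' : (i : ℝ) < j := by exact_mod_cast hij
  unfold nodeP
  nlinarith

lemma nodeP_mono (hk : 1 ≤ k) {i j : ℕ} (hij : i ≤ j) : nodeP k i ≤ nodeP k j := by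
  rcases eq_or_lt_of_le hij with h | h
  · subst h; rfl
  · exact (nodeP_lt hk h).le

lemma continuous_pstar : Continuous (pstar k) := by
  apply continuous_finset_sum
  intro j _
  exact continuous_const.mul (Real.continuous_sin.comp (continuous_const.mul continuous_id))

lemma continuous_Efun : Continuous (Efun k) :=
  continuous_id.sub continuous_pstar

lemma pstar_pi : pstar k π = 0 := by
  unfold pstar
  refine Finset.sum_eq_zero fun j _ => ?_
  rw [Real.sin_nat_mul_pi]
  ring

lemma pstar_zero : pstar k 0 = 0 := by
  unfold pstar
  refine Finset.sum_eq_zero fun j _ => ?_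
  simp

lemma pstar_neg (x : ℝ) : pstar k (-x) = -pstar k x := by
  unfold pstar
  rw [← Finset.sum_neg_distrib]
  refine Finset.sum_congr rfl fun j _ => ?_
  rw [mul_neg, Real.sin_neg, mul_neg]

/-- Key geometric sum over ℂ. -/
lemma alt_exp_sum (hk : 1 ≤ k) {j : ℕ} (hj : j < k) :
    ∑ i ∈ Finset.range (2 * k), (((-1 : ℝ) ^ i : ℝ) : ℂ) *
      Complex.exp ((j * nodeP k i : ℝ) * Complex.I) = 0 := by
  have hkR : (k : ℝ) ≠ 0 := Nat.cast_ne_zero.mpr (by omega)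
  set φ : ℝ := j * π / k with hφ
  set z : ℂ := -Complex.exp (φ * Complex.I) with hz
  have hterm : ∀ i : ℕ, (((-1 : ℝ) ^ i : ℝ) : ℂ) * Complex.exp ((j * nodeP k i : ℝ) * Complex.I)
      = Complex.exp ((-(j * π) : ℝ) * Complex.I) * z ^ i := by
    intro i
    have hre : (-(j * π) : ℝ) + i * φ = j * nodeP k i := by
      rw [hφ, nodeP]; field_simp
    rw [hz]
    conv_rhs => rw [neg_pow, ← Complex.exp_nat_mul]
    rw [mul_left_comm, ← Complex.exp_add]
    have hexp : ((-(j * π) : ℝ) : ℂ) * Complex.I + (i : ℂ) * ((φ : ℝ) * Complex.I)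
        = ((j * nodeP k i : ℝ) : ℂ) * Complex.I := by
      rw [← hre]; push_cast; ring
    rw [hexp]
    push_cast
    ring
  rw [Finset.sum_congr rfl fun i _ => hterm i, ← Finset.mul_sum]
  have hz1 : z ≠ 1 := by
    intro h
    have h2 : Complex.exp (φ * Complex.I) = -1 := by
      have := congrArg Neg.neg h
      simpa [hz] using this
    have h3 : Real.cos φ = -1 := by
      have := congrArg Complex.re h2
      simpa [Complex.exp_ofReal_mul_I_re] using this
    have hφ0 : 0 ≤ φ := by positivity
    have hφπ : φ < π := by
      rw [hφ, div_lt_iff₀ (by positivity)]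
      have : (j:ℝ) < k := by exact_mod_cast hj
      nlinarith [Real.pi_pos]
    have : Real.cos π < Real.cos φ := by
      apply Real.strictAntiOn_cos ⟨hφ0, hφπ.le⟩ ⟨by positivity, le_refl _⟩ hφπ
    rw [Real.cos_pi, h3] at this
    exact lt_irrefl _ this
  have hz2k : z ^ (2 * k) = 1 := by
    have h2k : ((2 * k : ℕ) : ℂ) * ((φ : ℝ) * Complex.I) = (j : ℤ) * (2 * π * Complex.I) := by
      have hr : ((2 * k : ℕ) : ℝ) * φ = (j : ℝ) * (2 * π) := by
        rw [hφ]; field_simp; push_cast; ring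
      calc ((2 * k : ℕ) : ℂ) * ((φ : ℝ) * Complex.I)
          = (((2 * k : ℕ) : ℝ) * φ : ℝ) * Complex.I := by push_cast; ring
        _ = ((j : ℝ) * (2 * π) : ℝ) * Complex.I := by rw [hr]
        _ = (j : ℤ) * (2 * π * Complex.I) := by push_cast; ring
    have : z ^ (2 * k) = Complex.exp (φ * Complex.I) ^ (2 * k) := by
      rw [hz]
      exact Even.neg_pow (even_two_mul k) _
    rw [this, ← Complex.exp_nat_mul, h2k, Complex.exp_int_mul_two_pi_mul_I]
  rw [geom_sum_eq hz1, hz2k]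
  simp

lemma alt_cos_sum (hk : 1 ≤ k) {j : ℕ} (hj : j < k) :
    ∑ i ∈ Finset.range (2 * k), (-1 : ℝ) ^ i * Real.cos (j * nodeP k i) = 0 := by
  have h := congrArg Complex.re (alt_exp_sum hk hj)
  rw [Complex.re_sum] at h
  simp only [Complex.zero_re] at h
  rw [← h]
  refine Finset.sum_congr rfl fun i _ => ?_
  rw [Complex.re_ofReal_mul, Complex.exp_ofReal_mul_I_re]

lemma alt_sin_sum (hk : 1 ≤ k) {j : ℕ} (hj : j < k) :
    ∑ i ∈ Finset.range (2 * k), (-1 : ℝ) ^ i * Real.sin (j * nodeP k i) = 0 := by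
  have h := congrArg Complex.im (alt_exp_sum hk hj)
  rw [Complex.im_sum] at h
  simp only [Complex.zero_im] at h
  rw [← h]
  refine Finset.sum_congr rfl fun i _ => ?_
  rw [Complex.im_ofReal_mul, Complex.exp_ofReal_mul_I_im]

lemma cos_range_sum (hk : 1 ≤ k) {m : ℕ} (h0 : 0 < m) (hm : m < 2 * k) :
    ∑ j ∈ Finset.range k, Real.cos (j * m * π / k) = (1 - (-1 : ℝ) ^ m) / 2 := by
  have hkR : (k : ℝ) ≠ 0 := Nat.cast_ne_zero.mpr (by omega)
  have hkpos : (0:ℝ) < k := by positivity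
  set ψ : ℝ := m * π / k with hψ
  have hψ0 : 0 < ψ := by
    rw [hψ]; positivity
  have hψ2 : ψ < 2 * π := by
    rw [hψ, div_lt_iff₀ hkpos]
    have : (m : ℝ) < 2 * k := by exact_mod_cast hm
    nlinarith [Real.pi_pos]
  set w : ℂ := Complex.exp ((ψ : ℝ) * Complex.I) with hw
  have hwre : w.re = Real.cos ψ := Complex.exp_ofReal_mul_I_re ψ
  have hwim : w.im = Real.sin ψ := Complex.exp_ofReal_mul_I_im ψ
  have hsum : ∑ j ∈ Finset.range k, Real.cos (↑j * ↑m * π / ↑k)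
      = (∑ j ∈ Finset.range k, w ^ j).re := by
    rw [Complex.re_sum]
    refine Finset.sum_congr rfl fun j _ => ?_
    have h1 : ((j * m * π / k : ℝ) : ℂ) * Complex.I = (j : ℂ) * ((ψ : ℝ) * Complex.I) := by
      rw [hψ]; push_cast; ring
    rw [← Complex.exp_ofReal_mul_I_re, h1, Complex.exp_nat_mul, hw]
  have hw1 : w ≠ 1 := by
    intro hone
    rw [hw, Complex.exp_eq_one_iff] at hone
    obtain ⟨n, hn⟩ := hone
    have hn' : ((ψ : ℝ) : ℂ) * Complex.I = ((n : ℝ) * (2 * π) : ℝ) * Complex.I := by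
      rw [hn]; push_cast; ring
    have hre : ψ = (n : ℝ) * (2 * π) := by
      have := mul_right_cancel₀ Complex.I_ne_zero hn'
      exact_mod_cast this
    have h1 : (0 : ℝ) < (n : ℝ) := by nlinarith [Real.pi_pos]
    have h2 : (n : ℝ) < 1 := by nlinarith [Real.pi_pos]
    have h1' : 0 < n := by exact_mod_cast h1
    have h2' : n < 1 := by exact_mod_cast h2
    omega
  have hwk : w ^ k = (-1 : ℂ) ^ m := by
    rw [hw, ← Complex.exp_nat_mul]
    have h1 : (k : ℂ) * ((ψ : ℝ) * Complex.I) = (m : ℂ) * ((π : ℝ) * Complex.I) := by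
      have hr : (k : ℝ) * ψ = m * π := by rw [hψ]; field_simp
      calc (k : ℂ) * ((ψ : ℝ) * Complex.I) = (((k : ℝ) * ψ : ℝ) : ℂ) * Complex.I := by
            push_cast; ring
        _ = ((m * π : ℝ) : ℂ) * Complex.I := by rw [hr]
        _ = (m : ℂ) * ((π : ℝ) * Complex.I) := by push_cast; ring
    rw [h1, Complex.exp_nat_mul, Complex.exp_pi_mul_I]
  have hcos1 : Real.cos ψ ≠ 1 := by
    intro hc
    apply hw1
    have hsin : Real.sin ψ = 0 := by nlinarith [Real.sin_sq_add_cos_sq ψ]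
    apply Complex.ext
    · rw [hwre, hc, Complex.one_re]
    · rw [hwim, hsin, Complex.one_im]
  rw [hsum, geom_sum_eq hw1, hwk]
  rcases Nat.even_or_odd m with hpar | hpar
  · rw [hpar.neg_one_pow, hpar.neg_one_pow]
    simp
  · rw [hpar.neg_one_pow, hpar.neg_one_pow]
    have hnum : (-1 - 1 : ℂ) = -2 := by norm_num
    rw [hnum, div_eq_mul_inv]
    have hre2 : ((-2 : ℂ) * (w - 1)⁻¹).re = -2 * ((w - 1)⁻¹).re := by
      simp [Complex.mul_re]
    rw [hre2, Complex.inv_re]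
    have h3 : (w - 1).re = Real.cos ψ - 1 := by
      rw [Complex.sub_re, hwre, Complex.one_re]
    have h4 : Complex.normSq (w - 1) = 2 - 2 * Real.cos ψ := by
      rw [Complex.normSq_apply, h3, Complex.sub_im, hwim, Complex.one_im]
      nlinarith [Real.sin_sq_add_cos_sq ψ]
    rw [h3, h4]
    have h5 : 2 - 2 * Real.cos ψ ≠ 0 := by
      intro h; apply hcos1; linarith
    field_simp
    ring

lemma sin_ortho_aux (hk : 1 ≤ k) {i l : ℕ} (hl1 : 1 ≤ l) (hik : i < k) (hli : l ≤ i) :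
    ∑ j ∈ Finset.range k, Real.sin (j * i * π / k) * Real.sin (j * l * π / k)
      = if i = l then (k : ℝ) / 2 else 0 := by
  have hkR : (k : ℝ) ≠ 0 := Nat.cast_ne_zero.mpr (by omega)
  have hterm : ∀ j : ℕ, Real.sin (j * i * π / k) * Real.sin (j * l * π / k)
      = (Real.cos ((j : ℝ) * ((i - l : ℕ) : ℝ) * π / k)
        - Real.cos ((j : ℝ) * ((i + l : ℕ) : ℝ) * π / k)) / 2 := by
    intro j
    have h1 : ((j : ℝ) * ((i - l : ℕ) : ℝ) * π / k) = j * i * π / k - j * l * π / k := by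
      rw [Nat.cast_sub hli]; ring
    have h2 : ((j : ℝ) * ((i + l : ℕ) : ℝ) * π / k) = j * i * π / k + j * l * π / k := by
      push_cast; ring
    rw [h1, h2, Real.cos_sub_cos]
    have e1 : (j * i * π / k - j * l * π / k + (j * i * π / k + j * l * π / k)) / 2
        = (j : ℝ) * i * π / k := by ring
    have e2 : (j * i * π / k - j * l * π / k - (j * i * π / k + j * l * π / k)) / 2
        = -((j : ℝ) * l * π / k) := by ring
    rw [e1, e2, Real.sin_neg]
    ring
  rw [Finset.sum_congr rfl fun j _ => hterm j, ← Finset.sum_div]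
  rcases eq_or_lt_of_le hli with heq | hlt
  · subst heq
    simp only [if_pos rfl]
    have h2 : ∑ j ∈ Finset.range k, (Real.cos ((j : ℝ) * ((l - l : ℕ) : ℝ) * π / k)
        - Real.cos ((j : ℝ) * ((l + l : ℕ) : ℝ) * π / k)) = k := by
      rw [Finset.sum_sub_distrib]
      have hA : ∑ j ∈ Finset.range k, Real.cos ((j : ℝ) * ((l - l : ℕ) : ℝ) * π / k) = k := by
        simp [Nat.sub_self]
      have hB := cos_range_sum hk (m := l + l) (by omega) (by omega)
      rw [hA, hB]
      have heven : Even (l + l) := ⟨l, rfl⟩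
      rw [heven.neg_one_pow]
      simp
    rw [h2]
    simp
  · have hne : i ≠ l := by omega
    simp only [if_neg hne]
    have h2 : ∑ j ∈ Finset.range k, (Real.cos ((j : ℝ) * ((i - l : ℕ) : ℝ) * π / k)
        - Real.cos ((j : ℝ) * ((i + l : ℕ) : ℝ) * π / k)) = 0 := by
      rw [Finset.sum_sub_distrib]
      have hs1 := cos_range_sum hk (m := i - l) (by omega) (by omega)
      have hs2 := cos_range_sum hk (m := i + l) (by omega) (by omega)
      rw [hs1, hs2]
      have hpar : (-1 : ℝ) ^ (i - l) = (-1 : ℝ) ^ (i + l) := by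
        rcases Nat.even_or_odd (i + l) with hp | hp
        · have hiff : Even i ↔ Even l := Nat.even_add.mp hp
          have : Even (i - l) := (Nat.even_sub hli).mpr hiff
          rw [this.neg_one_pow, hp.neg_one_pow]
        · have hne' : ¬ (Even i ↔ Even l) := by
            intro hc
            exact Nat.not_even_iff_odd.mpr hp (Nat.even_add.mpr hc)
          have : Odd (i - l) := Nat.not_even_iff_odd.mp
            (fun hc => hne' ((Nat.even_sub hli).mp hc))
          rw [this.neg_one_pow, hp.neg_one_pow]
      rw [hpar]
      ring
    rw [h2]
    simp

lemma sin_ortho (hk : 1 ≤ k) {i l : ℕ} (hi1 : 1 ≤ i) (hik : i < k) (hl1 : 1 ≤ l) (hlk : l < k) :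
    ∑ j ∈ Finset.range k, Real.sin (j * i * π / k) * Real.sin (j * l * π / k)
      = if i = l then (k : ℝ) / 2 else 0 := by
  rcases le_total l i with h | h
  · exact sin_ortho_aux hk hl1 hik h
  · have := sin_ortho_aux hk hi1 hlk h
    rw [Finset.sum_congr rfl fun j _ => mul_comm _ _] at this
    rw [this]
    by_cases heq : i = l
    · simp [heq]
    · rw [if_neg (fun hc => heq hc.symm), if_neg heq]

lemma pstar_node (hk : 1 ≤ k) {l : ℕ} (hl1 : 1 ≤ l) (hlk : l < k) :
    pstar k (l * π / k) = l * π / k := by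
  have hkR : (k : ℝ) ≠ 0 := Nat.cast_ne_zero.mpr (by omega)
  unfold pstar cstar
  have hterm : ∀ j : ℕ, (2 * π / (k : ℝ) ^ 2) * (∑ i ∈ Finset.range k,
        (i : ℝ) * Real.sin (i * j * π / k)) * Real.sin (j * ((l : ℝ) * π / k))
      = (2 * π / (k : ℝ) ^ 2) * ∑ i ∈ Finset.range k,
        (i : ℝ) * (Real.sin (j * i * π / k) * Real.sin (j * l * π / k)) := by
    intro j
    have key : (∑ i ∈ Finset.range k, (i : ℝ) * Real.sin (i * j * π / k))
          * Real.sin (j * ((l : ℝ) * π / k))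
        = ∑ i ∈ Finset.range k, (i : ℝ)
          * (Real.sin (j * i * π / k) * Real.sin (j * l * π / k)) := by
      rw [Finset.sum_mul]
      refine Finset.sum_congr rfl fun i _ => ?_
      have e1 : (i : ℝ) * j * π / k = j * i * π / k := by ring
      have e2 : (j : ℝ) * ((l : ℝ) * π / k) = (j : ℝ) * l * π / k := by ring
      rw [e1, e2, mul_assoc]
    rw [mul_assoc, key]
  rw [Finset.sum_congr rfl fun j _ => hterm j, ← Finset.mul_sum, Finset.sum_comm]
  have hinner : ∀ i ∈ Finset.range k, (∑ j ∈ Finset.range k,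
        (i : ℝ) * (Real.sin (j * i * π / k) * Real.sin (j * l * π / k)))
      = if i = l then (l : ℝ) * ((k : ℝ) / 2) else 0 := by
    intro i _hi
    rw [← Finset.mul_sum]
    rcases Nat.eq_zero_or_pos i with h0 | hpos
    · subst h0
      rw [if_neg (by omega)]
      simp
    · rw [sin_ortho hk hpos (Finset.mem_range.mp _hi) hl1 hlk]
      by_cases heq : i = l
      · subst heq; simp
      · simp [heq]
  rw [Finset.sum_congr rfl hinner,
    Finset.sum_ite_eq' (Finset.range k) l (fun _ => (l : ℝ) * ((k : ℝ) / 2))]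
  rw [if_pos (Finset.mem_range.mpr hlk)]
  field_simp

noncomputable def Pq (k : ℕ) : Polynomial ℝ :=
  Polynomial.C 1 - ∑ j ∈ Finset.range k,
    Polynomial.C ((j : ℝ) * cstar k j) * Polynomial.Chebyshev.T ℝ (j : ℤ)

lemma Pq_eval (x : ℝ) : (Pq k).eval (Real.cos x)
    = 1 - ∑ j ∈ Finset.range k, (j : ℝ) * cstar k j * Real.cos (j * x) := by
  unfold Pq
  rw [Polynomial.eval_sub, Polynomial.eval_C, Polynomial.eval_finset_sum]
  congr 1
  refine Finset.sum_congr rfl fun j _ => ?_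
  rw [Polynomial.eval_mul, Polynomial.eval_C, Polynomial.Chebyshev.T_real_cos]
  push_cast
  ring

lemma hasDerivAt_Efun (x : ℝ) :
    HasDerivAt (Efun k) ((Pq k).eval (Real.cos x)) x := by
  rw [Pq_eval]
  have h1 : HasDerivAt (pstar k)
      (∑ j ∈ Finset.range k, (j : ℝ) * cstar k j * Real.cos (j * x)) x := by
    have := HasDerivAt.fun_sum (𝕜 := ℝ) (u := Finset.range k)
      (A := fun j x => cstar k j * Real.sin (j * x))
      (A' := fun j => (j : ℝ) * cstar k j * Real.cos (j * x)) (x := x) ?_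
    · exact this
    · intro j _
      have hinner : HasDerivAt (fun y : ℝ => (j : ℝ) * y) ((j : ℝ)) x := by
        simpa using (hasDerivAt_id x).const_mul (j : ℝ)
      have hsin : HasDerivAt (fun y : ℝ => Real.sin ((j : ℝ) * y))
          (Real.cos ((j : ℝ) * x) * (j : ℝ)) x :=
        (Real.hasDerivAt_sin ((j : ℝ) * x)).comp x hinner
      have := hsin.const_mul (cstar k j)
      exact this.congr_deriv (by ring)
  have h2 : HasDerivAt (fun y : ℝ => y) 1 x := hasDerivAt_id x
  exact h2.sub h1

lemma deriv_Efun (x : ℝ) : deriv (Efun k) x = (Pq k).eval (Real.cos x) :=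
  (hasDerivAt_Efun x).deriv

lemma natDegree_T_le : ∀ n : ℕ, (Polynomial.Chebyshev.T ℝ (n : ℤ)).natDegree ≤ n := by
  intro n
  induction n using Nat.strong_induction_on with
  | _ n ih =>
    match n with
    | 0 => simp [Polynomial.Chebyshev.T_zero]
    | 1 => simp [Polynomial.Chebyshev.T_one]
    | (m + 2) =>
      have h1 := ih (m + 1) (by omega)
      have h2 := ih m (by omega)
      have hc : ((m + 2 : ℕ) : ℤ) = (m : ℤ) + 2 := by push_cast; ring
      rw [hc, Polynomial.Chebyshev.T_add_two]
      refine le_trans (Polynomial.natDegree_sub_le _ _) ?_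
      rw [max_le_iff]
      constructor
      · have e1 : (2 : Polynomial ℝ) * Polynomial.X * Polynomial.Chebyshev.T ℝ ((m : ℤ) + 1)
            = Polynomial.C 2 * (Polynomial.X * Polynomial.Chebyshev.T ℝ ((m : ℤ) + 1)) := by
          have h2C : (Polynomial.C (2:ℝ)) = (2 : Polynomial ℝ) := by
            have := Polynomial.C_eq_natCast (R := ℝ) 2
            simpa using this
          rw [h2C]; ring
        rw [e1]
        refine le_trans (Polynomial.natDegree_C_mul_le _ _) ?_
        refine le_trans (Polynomial.natDegree_mul_le) ?_
        have : ((m : ℤ) + 1) = ((m + 1 : ℕ) : ℤ) := by push_cast; ring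
        rw [this]
        have := Polynomial.natDegree_X_le (R := ℝ)
        omega
      · omega

lemma natDegree_Pq_le (hk : 1 ≤ k) : (Pq k).natDegree ≤ k - 1 := by
  unfold Pq
  refine le_trans (Polynomial.natDegree_sub_le _ _) ?_
  rw [max_le_iff]
  constructor
  · simp
  · refine Polynomial.natDegree_sum_le_of_forall_le _ _ fun j hj => ?_
    refine le_trans (Polynomial.natDegree_C_mul_le _ _) ?_
    refine le_trans (natDegree_T_le j) ?_
    have := Finset.mem_range.mp hj
    omega

lemma Efun_zero : Efun k 0 = 0 := by
  unfold Efun; rw [pstar_zero]; ring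

lemma Efun_pi : Efun k π = π := by
  unfold Efun; rw [pstar_pi]; ring

lemma Efun_neg (x : ℝ) : Efun k (-x) = -Efun k x := by
  unfold Efun; rw [pstar_neg]; ring

lemma Pq_ne_zero (hk : 1 ≤ k) : Pq k ≠ 0 := by
  intro h
  have hd : ∀ x, deriv (Efun k) x = 0 := by
    intro x
    rw [deriv_Efun, h]
    simp
  have hdiff : Differentiable ℝ (Efun k) := fun x => (hasDerivAt_Efun x).differentiableAt
  have := is_const_of_deriv_eq_zero hdiff hd 0 π
  rw [Efun_zero, Efun_pi] at this
  exact Real.pi_ne_zero this.symm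

/-- Any finite set of zeros of `deriv (Efun k)` in `(-π, π)` has at most `2(k-1)` elements. -/
lemma card_deriv_zeros (hk : 1 ≤ k) (W : Finset ℝ)
    (hW : ∀ w ∈ W, w ∈ Set.Ioo (-π) π ∧ deriv (Efun k) w = 0) :
    W.card ≤ 2 * (k - 1) := by
  have habs : ∀ w ∈ W, |w| ∈ Set.Icc 0 π := by
    intro w hw
    obtain ⟨⟨h1, h2⟩, _⟩ := (hW w hw)
    constructor
    · exact abs_nonneg w
    · rw [abs_le]; constructor <;> linarith
  have hfib : ∀ a ∈ W.image Real.cos, (W.filter (fun w => Real.cos w = a)).card ≤ 2 := by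
    intro a ha
    obtain ⟨b, hb, hba⟩ := Finset.mem_image.mp ha
    have hsub : W.filter (fun w => Real.cos w = a) ⊆ {b, -b} := by
      intro w hw
      obtain ⟨hwW, hwa⟩ := Finset.mem_filter.mp hw
      have h1 : Real.cos |w| = Real.cos |b| := by
        rw [Real.cos_abs, Real.cos_abs, hwa, hba]
      have h2 : |w| = |b| := Real.injOn_cos (habs w hwW) (habs b hb) h1
      rcases abs_eq_abs.mp h2 with h | h
      · simp [h]
      · simp [h]
    refine le_trans (Finset.card_le_card hsub) ?_
    refine le_trans (Finset.card_insert_le _ _) ?_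
    simp
  have h1 : W.card ≤ 2 * (W.image Real.cos).card :=
    Finset.card_le_mul_card_image W 2 hfib
  have h2 : W.image Real.cos ⊆ (Pq k).roots.toFinset := by
    intro a ha
    obtain ⟨b, hb, hba⟩ := Finset.mem_image.mp ha
    rw [Multiset.mem_toFinset, Polynomial.mem_roots']
    refine ⟨Pq_ne_zero hk, ?_⟩
    obtain ⟨_, hz⟩ := hW b hb
    rw [deriv_Efun] at hz
    rw [Polynomial.IsRoot, ← hba]
    exact hz
  have h3 : (W.image Real.cos).card ≤ k - 1 := by
    refine le_trans (Finset.card_le_card h2) ?_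
    refine le_trans (Multiset.toFinset_card_le _) ?_
    refine le_trans (Polynomial.card_roots' _) (natDegree_Pq_le hk)
  omega

lemma nodeP_k_eq_zero (hk : 1 ≤ k) : nodeP k k = 0 := by
  have hkR : (k : ℝ) ≠ 0 := Nat.cast_ne_zero.mpr (by omega)
  rw [nodeP]
  field_simp
  ring

lemma Efun_node (hk : 1 ≤ k) {i : ℕ} (h1 : 1 ≤ i) (h2 : i ≤ 2 * k - 1) :
    Efun k (nodeP k i) = 0 := by
  have hkR : (k : ℝ) ≠ 0 := Nat.cast_ne_zero.mpr (by omega)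
  rcases lt_trichotomy i k with h | h | h
  · have m1 : 1 ≤ k - i := by omega
    have m2 : k - i < k := by omega
    have hnode : nodeP k i = -(((k - i : ℕ) : ℝ) * π / k) := by
      rw [nodeP, Nat.cast_sub (by omega)]
      field_simp
      ring
    rw [hnode, Efun_neg]
    unfold Efun
    rw [pstar_node hk m1 m2]
    ring
  · subst h
    rw [nodeP_k_eq_zero hk]
    exact Efun_zero
  · have m1 : 1 ≤ i - k := by omega
    have m2 : i - k < k := by omega
    have hnode : nodeP k i = ((i - k : ℕ) : ℝ) * π / k := by
      rw [nodeP, Nat.cast_sub (by omega)]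
      field_simp
      ring
    rw [hnode]
    unfold Efun
    rw [pstar_node hk m1 m2]
    ring

noncomputable def inodes (k : ℕ) : Finset ℝ :=
  (Finset.range (2 * k - 1)).image (fun l => nodeP k (l + 1))

lemma card_inodes (hk : 1 ≤ k) : (inodes k).card = 2 * k - 1 := by
  rw [inodes, Finset.card_image_of_injOn, Finset.card_range]
  intro a _ b _ hab
  by_contra hne
  rcases lt_or_gt_of_ne hne with h | h
  · exact absurd hab (ne_of_lt (nodeP_lt hk (by omega)))
  · exact absurd hab.symm (ne_of_lt (nodeP_lt hk (by omega)))

lemma mem_inodes {x : ℝ} (hx : x ∈ inodes k) :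
    ∃ i, 1 ≤ i ∧ i ≤ 2 * k - 1 ∧ x = nodeP k i := by
  obtain ⟨l, hl, hlx⟩ := Finset.mem_image.mp hx
  exact ⟨l + 1, by omega, by have := Finset.mem_range.mp hl; omega, hlx.symm⟩

lemma node_mem_inodes (hk : 1 ≤ k) {i : ℕ} (h1 : 1 ≤ i) (h2 : i ≤ 2 * k - 1) :
    nodeP k i ∈ inodes k := by
  rw [inodes, Finset.mem_image]
  exact ⟨i - 1, Finset.mem_range.mpr (by omega), by congr 1; omega⟩

lemma inodes_zero (hk : 1 ≤ k) : ∀ x ∈ inodes k, Efun k x = 0 := by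
  intro x hx
  obtain ⟨i, h1, h2, rfl⟩ := mem_inodes hx
  exact Efun_node hk h1 h2

lemma inodes_mem_Ioo (hk : 1 ≤ k) : ∀ x ∈ inodes k, x ∈ Set.Ioo (-π) π := by
  intro x hx
  obtain ⟨i, h1, h2, rfl⟩ := mem_inodes hx
  constructor
  · have := nodeP_lt hk (show 0 < i by omega) (k := k)
    rw [nodeP_zero] at this
    exact this
  · have := nodeP_lt hk (show i < 2 * k by omega) (k := k)
    rw [nodeP_last hk] at this
    exact this

/-- Rolle chain: from `n+1` zeros of `f`, get `n` zeros of `deriv f` strictly between them. -/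
lemma rolle_chain {f : ℝ → ℝ} (hf : Continuous f) :
    ∀ (n : ℕ) (s : Finset ℝ), s.card = n + 1 → (∀ x ∈ s, f x = 0) →
    ∃ W : Finset ℝ, W.card = n ∧ ∀ w ∈ W, deriv f w = 0 ∧ w ∉ s ∧
      (∃ a ∈ s, a < w) ∧ (∃ b ∈ s, w < b) := by
  intro n
  induction n with
  | zero =>
    intro s _ _
    exact ⟨∅, by simp, by simp⟩
  | succ n ih =>
    intro s hcard hz
    have hne : s.Nonempty := by rw [← Finset.card_pos, hcard]; omega
    set M := s.max' hne with hM
    set s' := s.erase M with hs'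
    have hMmem : M ∈ s := s.max'_mem hne
    have hcard' : s'.card = n + 1 := by
      rw [hs', Finset.card_erase_of_mem hMmem, hcard]
      omega
    have hne' : s'.Nonempty := by rw [← Finset.card_pos, hcard']; omega
    set M' := s'.max' hne' with hM'
    have hM'mem' : M' ∈ s' := s'.max'_mem hne'
    have hM'mem : M' ∈ s := Finset.mem_of_mem_erase hM'mem'
    have hM'M : M' < M :=
      lt_of_le_of_ne (s.le_max' M' hM'mem) (Finset.ne_of_mem_erase hM'mem')
    obtain ⟨w, hw_mem, hw⟩ := exists_deriv_eq_zero hM'M hf.continuousOn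
      (by rw [hz M' hM'mem, hz M hMmem])
    obtain ⟨W', hW'card, hW'⟩ := ih s' hcard' fun x hx => hz x (Finset.mem_of_mem_erase hx)
    have hle' : ∀ v ∈ W', v < M' := by
      intro v hv
      obtain ⟨_, _, _, ⟨b, hb, hvb⟩⟩ := hW' v hv
      exact lt_of_lt_of_le hvb (s'.le_max' b hb)
    have hwW' : w ∉ W' := fun hc => absurd (hle' w hc) (not_lt.mpr hw_mem.1.le)
    refine ⟨insert w W', ?_, ?_⟩
    · rw [Finset.card_insert_of_notMem hwW', hW'card]
    · intro v hv
      rcases Finset.mem_insert.mp hv with heq | hv'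
      · subst heq
        refine ⟨hw, ?_, ⟨M', hM'mem, hw_mem.1⟩, ⟨M, hMmem, hw_mem.2⟩⟩
        intro hws
        rcases eq_or_ne v M with heq2 | hne2
        · rw [heq2] at hw_mem
          exact lt_irrefl _ hw_mem.2
        · have : v ∈ s' := Finset.mem_erase.mpr ⟨hne2, hws⟩
          exact absurd (s'.le_max' v this) (not_le.mpr hw_mem.1)
      · obtain ⟨hd, hns, ⟨a, ha, hav⟩, ⟨b, hb, hvb⟩⟩ := hW' v hv'
        refine ⟨hd, ?_, ⟨a, Finset.mem_of_mem_erase ha, hav⟩,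
          ⟨b, Finset.mem_of_mem_erase hb, hvb⟩⟩
        intro hvs
        rcases eq_or_ne v M with heq2 | hne2
        · have h1 : b ≤ M' := s'.le_max' b hb
          have h2 : v < M' := hle' v hv'
          have h3 : M' < v := by rw [heq2]; exact hM'M
          linarith
        · exact hns (Finset.mem_erase.mpr ⟨hne2, hvs⟩)

/-- The only zeros of `Efun` in `(-π, π)` are the interior nodes. -/
lemma Efun_zero_classify (hk : 1 ≤ k) {y : ℝ} (hy : y ∈ Set.Ioo (-π) π)
    (hzero : Efun k y = 0) : y ∈ inodes k := by
  by_contra hyn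
  set s : Finset ℝ := insert y (inodes k) with hs
  have hcard : s.card = (2 * k - 1) + 1 := by
    rw [hs, Finset.card_insert_of_notMem hyn, card_inodes hk]
  have hzeros : ∀ x ∈ s, Efun k x = 0 := by
    intro x hx
    rcases Finset.mem_insert.mp hx with rfl | hx'
    · exact hzero
    · exact inodes_zero hk x hx'
  have hsub : ∀ x ∈ s, x ∈ Set.Ioo (-π) π := by
    intro x hx
    rcases Finset.mem_insert.mp hx with rfl | hx'
    · exact hy
    · exact inodes_mem_Ioo hk x hx'
  obtain ⟨W, hWcard, hW⟩ := rolle_chain continuous_Efun (2 * k - 1) s hcard hzeros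
  have hWz : ∀ w ∈ W, w ∈ Set.Ioo (-π) π ∧ deriv (Efun k) w = 0 := by
    intro w hw
    obtain ⟨hd, _, ⟨a, ha, haw⟩, ⟨b, hb, hwb⟩⟩ := hW w hw
    exact ⟨⟨lt_trans (hsub a ha).1 haw, lt_trans hwb (hsub b hb).2⟩, hd⟩
  have := card_deriv_zeros hk W hWz
  omega

lemma interval_subset_Ioo (hk : 1 ≤ k) {i : ℕ} (hi : i < 2 * k) :
    Set.Ioo (nodeP k i) (nodeP k (i + 1)) ⊆ Set.Ioo (-π) π := by
  intro x hx
  constructor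
  · calc -π = nodeP k 0 := nodeP_zero.symm
      _ ≤ nodeP k i := nodeP_mono hk (by omega)
      _ < x := hx.1
  · calc x < nodeP k (i + 1) := hx.2
      _ ≤ nodeP k (2 * k) := nodeP_mono hk (by omega)
      _ = π := nodeP_last hk

lemma Efun_ne_zero_on_interval (hk : 1 ≤ k) {i : ℕ} (hi : i < 2 * k) {x : ℝ}
    (hx : x ∈ Set.Ioo (nodeP k i) (nodeP k (i + 1))) : Efun k x ≠ 0 := by
  intro hzero
  have := Efun_zero_classify hk (interval_subset_Ioo hk hi hx) hzero
  obtain ⟨m, h1, h2, hm⟩ := mem_inodes this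
  rcases le_or_gt m i with h | h
  · have := nodeP_mono hk h (k := k)
    rw [← hm] at this
    linarith [hx.1]
  · have := nodeP_mono hk (show i + 1 ≤ m by omega) (k := k)
    rw [← hm] at this
    linarith [hx.2]

lemma sign_transfer (hk : 1 ≤ k) {i : ℕ} (hi : i < 2 * k) {x y : ℝ}
    (hx : x ∈ Set.Ioo (nodeP k i) (nodeP k (i + 1)))
    (hy : y ∈ Set.Ioo (nodeP k i) (nodeP k (i + 1)))
    (hpos : 0 < Efun k x) : 0 < Efun k y := by
  by_contra hneg
  have hyneg : Efun k y < 0 :=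
    lt_of_le_of_ne (not_lt.mp hneg) (Efun_ne_zero_on_interval hk hi hy)
  rcases lt_trichotomy x y with h | h | h
  · have h0 : (0 : ℝ) ∈ Set.Ioo (Efun k y) (Efun k x) := ⟨hyneg, hpos⟩
    have := intermediate_value_Ioo' h.le continuous_Efun.continuousOn h0
    obtain ⟨z, hz, hz0⟩ := this
    have hzi : z ∈ Set.Ioo (nodeP k i) (nodeP k (i + 1)) :=
      ⟨lt_trans hx.1 hz.1, lt_trans hz.2 hy.2⟩
    exact Efun_ne_zero_on_interval hk hi hzi hz0
  · rw [h] at hpos; linarith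
  · have h0 : (0 : ℝ) ∈ Set.Ioo (Efun k y) (Efun k x) := ⟨hyneg, hpos⟩
    have := intermediate_value_Ioo h.le continuous_Efun.continuousOn h0
    obtain ⟨z, hz, hz0⟩ := this
    have hzi : z ∈ Set.Ioo (nodeP k i) (nodeP k (i + 1)) :=
      ⟨lt_trans hy.1 hz.1, lt_trans hz.2 hx.2⟩
    exact Efun_ne_zero_on_interval hk hi hzi hz0

lemma sign_transfer_neg (hk : 1 ≤ k) {i : ℕ} (hi : i < 2 * k) {x y : ℝ}
    (hx : x ∈ Set.Ioo (nodeP k i) (nodeP k (i + 1)))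
    (hy : y ∈ Set.Ioo (nodeP k i) (nodeP k (i + 1)))
    (hneg : Efun k x < 0) : Efun k y < 0 := by
  by_contra h
  have hypos : 0 < Efun k y :=
    lt_of_le_of_ne (not_lt.mp h) (Ne.symm (Efun_ne_zero_on_interval hk hi hy))
  have := sign_transfer hk hi hy hx hypos
  linarith

lemma alternate_contra (hk : 1 ≤ k) {v : ℝ} (hv : v ∈ inodes k)
    (hdv : deriv (Efun k) v = 0) : False := by
  obtain ⟨W, hWcard, hW⟩ := rolle_chain continuous_Efun (2 * k - 2) (inodes k)
    (by rw [card_inodes hk]; omega) (inodes_zero hk)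
  have hvW : v ∉ W := fun hc => (hW v hc).2.1 hv
  have hcard' : (insert v W).card = 2 * k - 1 := by
    rw [Finset.card_insert_of_notMem hvW, hWcard]; omega
  have hle : (insert v W).card ≤ 2 * (k - 1) := by
    refine card_deriv_zeros hk _ ?_
    intro w hw
    rcases Finset.mem_insert.mp hw with heq | hw'
    · subst heq; exact ⟨inodes_mem_Ioo hk _ hv, hdv⟩
    · obtain ⟨hd, _, ⟨a, ha, haw⟩, ⟨b, hb, hwb⟩⟩ := hW w hw'
      exact ⟨⟨lt_trans (inodes_mem_Ioo hk a ha).1 haw,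
        lt_trans hwb (inodes_mem_Ioo hk b hb).2⟩, hd⟩
  omega

lemma alternate_pos (hk : 1 ≤ k) {i : ℕ} (hi : i + 2 ≤ 2 * k)
    (hpos : ∀ x ∈ Set.Ioo (nodeP k (i + 1)) (nodeP k (i + 2)), 0 < Efun k x) :
    ∀ x ∈ Set.Ioo (nodeP k i) (nodeP k (i + 1)), Efun k x < 0 := by
  by_contra hc
  push_neg at hc
  obtain ⟨x₀, hx₀, hx₀ge⟩ := hc
  have hx₀pos : 0 < Efun k x₀ :=
    lt_of_le_of_ne hx₀ge (Ne.symm (Efun_ne_zero_on_interval hk (by omega) hx₀))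
  have hleft : ∀ x ∈ Set.Ioo (nodeP k i) (nodeP k (i + 1)), 0 < Efun k x :=
    fun x hx => sign_transfer hk (by omega) hx₀ hx hx₀pos
  have hvmem : nodeP k (i + 1) ∈ inodes k := node_mem_inodes hk (by omega) (by omega)
  have hEv : Efun k (nodeP k (i + 1)) = 0 := inodes_zero hk _ hvmem
  have hmin : IsLocalMin (Efun k) (nodeP k (i + 1)) := by
    have hnb : Set.Ioo (nodeP k i) (nodeP k (i + 2)) ∈ nhds (nodeP k (i + 1)) :=
      Ioo_mem_nhds (nodeP_lt hk (by omega)) (nodeP_lt hk (by omega))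
    refine Filter.eventually_of_mem hnb ?_
    intro x hx
    rw [hEv]
    rcases lt_trichotomy x (nodeP k (i + 1)) with h | h | h
    · exact (hleft x ⟨hx.1, h⟩).le
    · rw [h, hEv]
    · exact (hpos x ⟨h, hx.2⟩).le
  exact alternate_contra hk hvmem hmin.deriv_eq_zero

lemma alternate_neg (hk : 1 ≤ k) {i : ℕ} (hi : i + 2 ≤ 2 * k)
    (hneg : ∀ x ∈ Set.Ioo (nodeP k (i + 1)) (nodeP k (i + 2)), Efun k x < 0) :
    ∀ x ∈ Set.Ioo (nodeP k i) (nodeP k (i + 1)), 0 < Efun k x := by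
  by_contra hc
  push_neg at hc
  obtain ⟨x₀, hx₀, hx₀le⟩ := hc
  have hx₀neg : Efun k x₀ < 0 :=
    lt_of_le_of_ne hx₀le (Efun_ne_zero_on_interval hk (by omega) hx₀)
  have hleft : ∀ x ∈ Set.Ioo (nodeP k i) (nodeP k (i + 1)), Efun k x < 0 :=
    fun x hx => sign_transfer_neg hk (by omega) hx₀ hx hx₀neg
  have hvmem : nodeP k (i + 1) ∈ inodes k := node_mem_inodes hk (by omega) (by omega)
  have hEv : Efun k (nodeP k (i + 1)) = 0 := inodes_zero hk _ hvmem
  have hmax : IsLocalMax (Efun k) (nodeP k (i + 1)) := by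
    have hnb : Set.Ioo (nodeP k i) (nodeP k (i + 2)) ∈ nhds (nodeP k (i + 1)) :=
      Ioo_mem_nhds (nodeP_lt hk (by omega)) (nodeP_lt hk (by omega))
    refine Filter.eventually_of_mem hnb ?_
    intro x hx
    rw [hEv]
    rcases lt_trichotomy x (nodeP k (i + 1)) with h | h | h
    · exact (hleft x ⟨hx.1, h⟩).le
    · rw [h, hEv]
    · exact (hneg x ⟨h, hx.2⟩).le
  exact alternate_contra hk hvmem hmax.deriv_eq_zero

lemma last_interval_pos (hk : 1 ≤ k) :
    ∀ x ∈ Set.Ioo (nodeP k (2 * k - 1)) (nodeP k (2 * k)), 0 < Efun k x := by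
  have h1 : ∀ᶠ x in nhds π, 0 < Efun k x := by
    have hc : Filter.Tendsto (Efun k) (nhds π) (nhds π) := by
      have := (continuous_Efun (k := k)).continuousAt (x := π)
      rwa [ContinuousAt, Efun_pi] at this
    exact hc.eventually (eventually_gt_nhds Real.pi_pos)
  have hlt : nodeP k (2 * k - 1) < π := by
    have := nodeP_lt hk (show 2 * k - 1 < 2 * k by omega) (k := k)
    rwa [nodeP_last hk] at this
  have h2 : Set.Ioo (nodeP k (2 * k - 1)) π ∈ nhdsWithin π (Set.Iio π) :=
    Ioo_mem_nhdsLT_of_mem ⟨hlt, le_refl π⟩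
  have h1' : ∀ᶠ x in nhdsWithin π (Set.Iio π), 0 < Efun k x ∧
      x ∈ Set.Ioo (nodeP k (2 * k - 1)) π :=
    (h1.filter_mono nhdsWithin_le_nhds).and (Filter.eventually_of_mem h2 fun x hx => hx)
  obtain ⟨x₀, hx₀pos, hx₀mem⟩ := h1'.exists
  intro x hx
  rw [nodeP_last hk] at hx
  have e1 : (2 * k - 1) + 1 = 2 * k := by omega
  have hx' : x ∈ Set.Ioo (nodeP k (2 * k - 1)) (nodeP k ((2 * k - 1) + 1)) := by
    rw [e1, nodeP_last hk]; exact hx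
  have hx₀' : x₀ ∈ Set.Ioo (nodeP k (2 * k - 1)) (nodeP k ((2 * k - 1) + 1)) := by
    rw [e1, nodeP_last hk]; exact hx₀mem
  exact sign_transfer hk (by omega) hx₀' hx' hx₀pos

lemma sign_on_interval_aux (hk : 1 ≤ k) : ∀ d : ℕ, d ≤ 2 * k - 1 →
    ∀ x ∈ Set.Ioo (nodeP k (2 * k - 1 - d)) (nodeP k (2 * k - d)),
      0 < (-1 : ℝ) ^ d * Efun k x := by
  intro d
  induction d with
  | zero =>
    intro _ x hx
    simpa using last_interval_pos hk x hx
  | succ d ih =>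
    intro hd x hx
    set i := 2 * k - 2 - d with hi
    have e1 : 2 * k - 1 - d = i + 1 := by omega
    have e2 : 2 * k - d = i + 2 := by omega
    have e3 : 2 * k - 1 - (d + 1) = i := by omega
    have e4 : 2 * k - (d + 1) = i + 1 := by omega
    have hprev := ih (by omega)
    rw [e1, e2] at hprev
    rw [e3, e4] at hx
    rcases Nat.even_or_odd d with hp | hp
    · have hpow : (-1 : ℝ) ^ d = 1 := hp.neg_one_pow
      have hpos : ∀ y ∈ Set.Ioo (nodeP k (i + 1)) (nodeP k (i + 2)), 0 < Efun k y := by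
        intro y hy
        have := hprev y hy
        rw [hpow] at this
        linarith
      have := alternate_pos hk (by omega) hpos x hx
      have hpow1 : (-1 : ℝ) ^ (d + 1) = -1 := by
        have : Odd (d + 1) := by
          rw [Nat.odd_iff]; rw [Nat.even_iff] at hp; omega
        exact this.neg_one_pow
      rw [hpow1]
      linarith
    · have hpow : (-1 : ℝ) ^ d = -1 := hp.neg_one_pow
      have hneg : ∀ y ∈ Set.Ioo (nodeP k (i + 1)) (nodeP k (i + 2)), Efun k y < 0 := by
        intro y hy
        have := hprev y hy
        rw [hpow] at this
        linarith
      have := alternate_neg hk (by omega) hneg x hx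
      have hpow1 : (-1 : ℝ) ^ (d + 1) = 1 := by
        have : Even (d + 1) := by
          rw [Nat.even_iff]; rw [Nat.odd_iff] at hp; omega
        exact this.neg_one_pow
      rw [hpow1]
      linarith

lemma sign_final (hk : 1 ≤ k) {i : ℕ} (hi : i < 2 * k) {x : ℝ}
    (hx : x ∈ Set.Ioo (nodeP k i) (nodeP k (i + 1))) :
    0 < (-1 : ℝ) ^ (i + 1) * Efun k x := by
  have e1 : 2 * k - 1 - (2 * k - 1 - i) = i := by omega
  have e2 : 2 * k - (2 * k - 1 - i) = i + 1 := by omega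
  have hd := sign_on_interval_aux hk (2 * k - 1 - i) (by omega) x (by rw [e1, e2]; exact hx)
  have hpow : (-1 : ℝ) ^ (2 * k - 1 - i) = (-1 : ℝ) ^ (i + 1) := by
    rcases Nat.even_or_odd i with hp | hp
    · have h1 : Odd (2 * k - 1 - i) := by
        rw [Nat.odd_iff]
        rw [Nat.even_iff] at hp
        omega
      have h2 : Odd (i + 1) := by
        rw [Nat.odd_iff]
        rw [Nat.even_iff] at hp
        omega
      rw [h1.neg_one_pow, h2.neg_one_pow]
    · have h1 : Even (2 * k - 1 - i) := by
        rw [Nat.even_iff]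
        rw [Nat.odd_iff] at hp
        omega
      have h2 : Even (i + 1) := by
        rw [Nat.even_iff]
        rw [Nat.odd_iff] at hp
        omega
      rw [h1.neg_one_pow, h2.neg_one_pow]
  rwa [hpow] at hd

lemma alt_telescope (g : ℕ → ℝ) (n : ℕ) :
    ∑ i ∈ Finset.range n, (-1 : ℝ) ^ (i + 1) * (g (i + 1) - g i)
      = 2 * ∑ i ∈ Finset.range n, (-1 : ℝ) ^ i * g i + ((-1 : ℝ) ^ n * g n - g 0) := by
  induction n with
  | zero => simp
  | succ n ih =>
    rw [Finset.sum_range_succ, Finset.sum_range_succ (f := fun i => (-1 : ℝ) ^ i * g i), ih]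
    rw [pow_succ]
    ring

lemma alt0 (n : ℕ) : ∑ i ∈ Finset.range (2 * n), (-1 : ℝ) ^ i = 0 := by
  induction n with
  | zero => simp
  | succ n ih =>
    have h : 2 * (n + 1) = (2 * n) + 1 + 1 := by ring
    rw [h, Finset.sum_range_succ, Finset.sum_range_succ, ih]
    have he : (-1 : ℝ) ^ (2 * n) = 1 := Even.neg_one_pow ⟨n, by ring⟩
    rw [pow_succ, he]
    ring

lemma alt1 (n : ℕ) : ∑ i ∈ Finset.range (2 * n), (-1 : ℝ) ^ i * i = -(n : ℝ) := by
  induction n with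
  | zero => simp
  | succ n ih =>
    have h : 2 * (n + 1) = (2 * n) + 1 + 1 := by ring
    rw [h, Finset.sum_range_succ, Finset.sum_range_succ, ih]
    have he : (-1 : ℝ) ^ (2 * n) = 1 := Even.neg_one_pow ⟨n, by ring⟩
    have he2 : (-1 : ℝ) ^ (2 * n + 1) = -1 := by rw [pow_succ, he]; ring
    rw [he2, he]
    push_cast
    ring

lemma alt2 (n : ℕ) :
    ∑ i ∈ Finset.range (2 * n), (-1 : ℝ) ^ i * (i : ℝ) ^ 2 = (n : ℝ) - 2 * (n : ℝ) ^ 2 := by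
  induction n with
  | zero => simp
  | succ n ih =>
    have h : 2 * (n + 1) = (2 * n) + 1 + 1 := by ring
    rw [h, Finset.sum_range_succ, Finset.sum_range_succ, ih]
    have he : (-1 : ℝ) ^ (2 * n) = 1 := Even.neg_one_pow ⟨n, by ring⟩
    have he2 : (-1 : ℝ) ^ (2 * n + 1) = -1 := by rw [pow_succ, he]; ring
    rw [he2, he]
    push_cast
    ring

lemma alt_int_id (hk : 1 ≤ k) :
    ∑ i ∈ Finset.range (2 * k), (-1 : ℝ) ^ (i + 1)
      * ∫ x in (nodeP k i)..(nodeP k (i + 1)), x = π ^ 2 / k := by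
  have hkR : (k : ℝ) ≠ 0 := Nat.cast_ne_zero.mpr (by omega)
  have hterm : ∀ i : ℕ, (∫ x in (nodeP k i)..(nodeP k (i + 1)), x)
      = (fun m => (nodeP k m) ^ 2 / 2) (i + 1) - (fun m => (nodeP k m) ^ 2 / 2) i := by
    intro i
    rw [integral_id]
    ring
  rw [Finset.sum_congr rfl fun i _ => by rw [hterm i]]
  rw [alt_telescope (fun m => (nodeP k m) ^ 2 / 2) (2 * k)]
  have hb : (-1 : ℝ) ^ (2 * k) = 1 := Even.neg_one_pow ⟨k, by ring⟩
  rw [hb, nodeP_last hk, nodeP_zero]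
  have hsq : ∀ i : ℕ, (-1 : ℝ) ^ i * ((nodeP k i) ^ 2 / 2)
      = (π ^ 2 / 2) * ((-1 : ℝ) ^ i) - (π ^ 2 / k) * ((-1 : ℝ) ^ i * i)
        + (π ^ 2 / (2 * (k : ℝ) ^ 2)) * ((-1 : ℝ) ^ i * (i : ℝ) ^ 2) := by
    intro i
    rw [nodeP]
    field_simp
    ring
  rw [Finset.sum_congr rfl fun i _ => hsq i]
  rw [Finset.sum_add_distrib, Finset.sum_sub_distrib, ← Finset.mul_sum, ← Finset.mul_sum,
    ← Finset.mul_sum, alt0, alt1, alt2]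
  field_simp
  all_goals ring

lemma int_cos_piece {j : ℕ} (hj : 1 ≤ j) (a b : ℝ) :
    (∫ x in a..b, Real.cos (j * x)) = Real.sin (j * b) / j - Real.sin (j * a) / j := by
  have hjR : (j : ℝ) ≠ 0 := Nat.cast_ne_zero.mpr (by omega)
  rw [intervalIntegral.integral_comp_mul_left (fun x => Real.cos x) hjR, integral_cos]
  field_simp
  all_goals linear_combination (sin (↑j * b) - sin (↑j * a)) * mul_inv_cancel₀ hjR

lemma int_sin_piece {j : ℕ} (hj : 1 ≤ j) (a b : ℝ) :
    (∫ x in a..b, Real.sin (j * x)) = (-Real.cos (j * b) / j) - (-Real.cos (j * a) / j) := by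
  have hjR : (j : ℝ) ≠ 0 := Nat.cast_ne_zero.mpr (by omega)
  rw [intervalIntegral.integral_comp_mul_left (fun x => Real.sin x) hjR, integral_sin]
  field_simp
  all_goals linear_combination (cos (↑j * a) - cos (↑j * b)) * mul_inv_cancel₀ hjR

lemma alt_int_cos (hk : 1 ≤ k) {j : ℕ} (hj : j < k) :
    ∑ i ∈ Finset.range (2 * k), (-1 : ℝ) ^ (i + 1)
      * ∫ x in (nodeP k i)..(nodeP k (i + 1)), Real.cos (j * x) = 0 := by
  rcases Nat.eq_zero_or_pos j with rfl | hj1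
  · have hterm : ∀ i : ℕ, (∫ x in (nodeP k i)..(nodeP k (i + 1)), Real.cos ((0 : ℕ) * x))
        = (fun m => nodeP k m) (i + 1) - (fun m => nodeP k m) i := by
      intro i
      simp
    rw [Finset.sum_congr rfl fun i _ => by rw [hterm i]]
    rw [alt_telescope (fun m => nodeP k m) (2 * k)]
    have hb : (-1 : ℝ) ^ (2 * k) = 1 := Even.neg_one_pow ⟨k, by ring⟩
    rw [hb, nodeP_last hk, nodeP_zero]
    have hn : ∀ i : ℕ, (-1 : ℝ) ^ i * nodeP k i
        = (-π) * ((-1 : ℝ) ^ i) + (π / k) * ((-1 : ℝ) ^ i * i) := by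
      intro i
      rw [nodeP]
      ring
    rw [Finset.sum_congr rfl fun i _ => hn i]
    rw [Finset.sum_add_distrib, ← Finset.mul_sum, ← Finset.mul_sum, alt0, alt1]
    have hkR : (k : ℝ) ≠ 0 := Nat.cast_ne_zero.mpr (by omega)
    field_simp
    all_goals ring
  · have hterm : ∀ i : ℕ, (∫ x in (nodeP k i)..(nodeP k (i + 1)), Real.cos (j * x))
        = (fun m => Real.sin (j * nodeP k m) / j) (i + 1)
          - (fun m => Real.sin (j * nodeP k m) / j) i := by
      intro i
      exact int_cos_piece hj1 _ _
    rw [Finset.sum_congr rfl fun i _ => by rw [hterm i]]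
    rw [alt_telescope (fun m => Real.sin (j * nodeP k m) / j) (2 * k)]
    have hb : (-1 : ℝ) ^ (2 * k) = 1 := Even.neg_one_pow ⟨k, by ring⟩
    rw [hb, nodeP_last hk, nodeP_zero]
    have hs : ∑ i ∈ Finset.range (2 * k), (-1 : ℝ) ^ i * (Real.sin (j * nodeP k i) / j)
        = (1 / (j : ℝ)) * ∑ i ∈ Finset.range (2 * k), (-1 : ℝ) ^ i * Real.sin (j * nodeP k i) := by
      rw [Finset.mul_sum]
      exact Finset.sum_congr rfl fun i _ => by ring
    rw [hs, alt_sin_sum hk hj]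
    rw [mul_neg, Real.sin_neg, Real.sin_nat_mul_pi]
    ring

lemma alt_int_sin (hk : 1 ≤ k) {j : ℕ} (hj : j < k) :
    ∑ i ∈ Finset.range (2 * k), (-1 : ℝ) ^ (i + 1)
      * ∫ x in (nodeP k i)..(nodeP k (i + 1)), Real.sin (j * x) = 0 := by
  rcases Nat.eq_zero_or_pos j with rfl | hj1
  · simp
  · have hterm : ∀ i : ℕ, (∫ x in (nodeP k i)..(nodeP k (i + 1)), Real.sin (j * x))
        = (fun m => -Real.cos (j * nodeP k m) / j) (i + 1)
          - (fun m => -Real.cos (j * nodeP k m) / j) i := by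
      intro i
      exact int_sin_piece hj1 _ _
    rw [Finset.sum_congr rfl fun i _ => by rw [hterm i]]
    rw [alt_telescope (fun m => -Real.cos (j * nodeP k m) / j) (2 * k)]
    have hb : (-1 : ℝ) ^ (2 * k) = 1 := Even.neg_one_pow ⟨k, by ring⟩
    rw [hb, nodeP_last hk, nodeP_zero]
    have hs : ∑ i ∈ Finset.range (2 * k), (-1 : ℝ) ^ i * (-Real.cos (j * nodeP k i) / j)
        = (-1 / (j : ℝ)) * ∑ i ∈ Finset.range (2 * k), (-1 : ℝ) ^ i * Real.cos (j * nodeP k i) := by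
      rw [Finset.mul_sum]
      exact Finset.sum_congr rfl fun i _ => by ring
    rw [hs, alt_cos_sum hk hj]
    rw [mul_neg, Real.cos_neg]
    ring

lemma continuous_trig (a b : ℕ → ℝ) : Continuous (fun x : ℝ =>
    ∑ j ∈ Finset.range k, (a j * Real.cos (j * x) + b j * Real.sin (j * x))) := by
  apply continuous_finset_sum
  intro j _
  fun_prop

lemma alt_int_trig (hk : 1 ≤ k) (a b : ℕ → ℝ) :
    ∑ i ∈ Finset.range (2 * k), (-1 : ℝ) ^ (i + 1)
      * ∫ x in (nodeP k i)..(nodeP k (i + 1)),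
        (x - ∑ j ∈ Finset.range k, (a j * Real.cos (j * x) + b j * Real.sin (j * x)))
    = π ^ 2 / k := by
  have hsplit : ∀ i : ℕ, (∫ x in (nodeP k i)..(nodeP k (i + 1)),
        (x - ∑ j ∈ Finset.range k, (a j * Real.cos (j * x) + b j * Real.sin (j * x))))
      = (∫ x in (nodeP k i)..(nodeP k (i + 1)), x)
        - ∑ j ∈ Finset.range k,
          (a j * (∫ x in (nodeP k i)..(nodeP k (i + 1)), Real.cos (j * x))
            + b j * (∫ x in (nodeP k i)..(nodeP k (i + 1)), Real.sin (j * x))) := by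
    intro i
    have hci : ∀ j : ℕ, Continuous fun x : ℝ => Real.cos ((j : ℝ) * x) := by
      intro j; fun_prop
    have hsi : ∀ j : ℕ, Continuous fun x : ℝ => Real.sin ((j : ℝ) * x) := by
      intro j; fun_prop
    have hterm : ∀ j : ℕ, Continuous fun x : ℝ =>
        a j * Real.cos ((j : ℝ) * x) + b j * Real.sin ((j : ℝ) * x) := by
      intro j; fun_prop
    rw [intervalIntegral.integral_sub (continuous_id'.intervalIntegrable _ _)
      ((continuous_trig a b).intervalIntegrable _ _)]
    congr 1
    rw [intervalIntegral.integral_finset_sum (fun j _ => (hterm j).intervalIntegrable _ _)]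
    refine Finset.sum_congr rfl fun j _ => ?_
    rw [intervalIntegral.integral_add
      (((hci j).const_mul (a j)).intervalIntegrable _ _)
      (((hsi j).const_mul (b j)).intervalIntegrable _ _),
      intervalIntegral.integral_const_mul, intervalIntegral.integral_const_mul]
  rw [Finset.sum_congr rfl fun i _ => by rw [hsplit i]]
  have hdistr : ∑ i ∈ Finset.range (2 * k), (-1 : ℝ) ^ (i + 1)
      * ((∫ x in (nodeP k i)..(nodeP k (i + 1)), x)
        - ∑ j ∈ Finset.range k,
          (a j * (∫ x in (nodeP k i)..(nodeP k (i + 1)), Real.cos (j * x))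
            + b j * (∫ x in (nodeP k i)..(nodeP k (i + 1)), Real.sin (j * x))))
      = (∑ i ∈ Finset.range (2 * k), (-1 : ℝ) ^ (i + 1)
          * ∫ x in (nodeP k i)..(nodeP k (i + 1)), x)
        - ∑ i ∈ Finset.range (2 * k), ∑ j ∈ Finset.range k,
          (a j * ((-1 : ℝ) ^ (i + 1) * ∫ x in (nodeP k i)..(nodeP k (i + 1)), Real.cos (j * x))
            + b j * ((-1 : ℝ) ^ (i + 1)
              * ∫ x in (nodeP k i)..(nodeP k (i + 1)), Real.sin (j * x))) := by
    rw [← Finset.sum_sub_distrib]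
    refine Finset.sum_congr rfl fun i _ => ?_
    rw [mul_sub, Finset.mul_sum]
    congr 1
    refine Finset.sum_congr rfl fun j _ => ?_
    ring
  rw [hdistr, Finset.sum_comm]
  have hz : ∀ j ∈ Finset.range k, ∑ i ∈ Finset.range (2 * k),
      (a j * ((-1 : ℝ) ^ (i + 1) * ∫ x in (nodeP k i)..(nodeP k (i + 1)), Real.cos (j * x))
        + b j * ((-1 : ℝ) ^ (i + 1)
          * ∫ x in (nodeP k i)..(nodeP k (i + 1)), Real.sin (j * x))) = 0 := by
    intro j hj
    rw [Finset.sum_add_distrib, ← Finset.mul_sum, ← Finset.mul_sum,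
      alt_int_cos hk (Finset.mem_range.mp hj), alt_int_sin hk (Finset.mem_range.mp hj)]
    ring
  rw [Finset.sum_congr rfl hz, Finset.sum_const, alt_int_id hk]
  simp

lemma abs_neg_one_pow_real (n : ℕ) : |(-1 : ℝ) ^ n| = 1 := by
  rw [abs_pow, abs_neg, abs_one, one_pow]

lemma lower_bound (hk : 1 ≤ k) (a b : ℕ → ℝ) :
    π ^ 2 / k ≤ ∫ x in (-π)..π,
      |x - ∑ j ∈ Finset.range k, (a j * Real.cos (j * x) + b j * Real.sin (j * x))| := by
  have hFc : Continuous (fun x : ℝ =>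
      x - ∑ j ∈ Finset.range k, (a j * Real.cos (j * x) + b j * Real.sin (j * x))) :=
    continuous_id'.sub (continuous_trig a b)
  have hadj : ∑ i ∈ Finset.range (2 * k), ∫ x in (nodeP k i)..(nodeP k (i + 1)),
        |x - ∑ j ∈ Finset.range k, (a j * Real.cos (j * x) + b j * Real.sin (j * x))|
      = ∫ x in (nodeP k 0)..(nodeP k (2 * k)),
        |x - ∑ j ∈ Finset.range k, (a j * Real.cos (j * x) + b j * Real.sin (j * x))| :=
    intervalIntegral.sum_integral_adjacent_intervals
      (fun i _ => (hFc.abs.intervalIntegrable _ _))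
  rw [nodeP_zero, nodeP_last hk] at hadj
  calc π ^ 2 / k
      = |∑ i ∈ Finset.range (2 * k), (-1 : ℝ) ^ (i + 1)
          * ∫ x in (nodeP k i)..(nodeP k (i + 1)),
            (x - ∑ j ∈ Finset.range k, (a j * Real.cos (j * x) + b j * Real.sin (j * x)))| := by
        rw [alt_int_trig hk a b]
        exact (abs_of_nonneg (by positivity)).symm
    _ ≤ ∑ i ∈ Finset.range (2 * k), |(-1 : ℝ) ^ (i + 1)
          * ∫ x in (nodeP k i)..(nodeP k (i + 1)),
            (x - ∑ j ∈ Finset.range k, (a j * Real.cos (j * x) + b j * Real.sin (j * x)))| :=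
        Finset.abs_sum_le_sum_abs _ _
    _ = ∑ i ∈ Finset.range (2 * k), |∫ x in (nodeP k i)..(nodeP k (i + 1)),
            (x - ∑ j ∈ Finset.range k, (a j * Real.cos (j * x) + b j * Real.sin (j * x)))| := by
        refine Finset.sum_congr rfl fun i _ => ?_
        rw [abs_mul, abs_neg_one_pow_real, one_mul]
    _ ≤ ∑ i ∈ Finset.range (2 * k), ∫ x in (nodeP k i)..(nodeP k (i + 1)),
            |x - ∑ j ∈ Finset.range k, (a j * Real.cos (j * x) + b j * Real.sin (j * x))| := by
        refine Finset.sum_le_sum fun i _ => ?_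
        exact intervalIntegral.abs_integral_le_integral_abs (nodeP_lt hk (lt_add_one i)).le
    _ = ∫ x in (-π)..π,
          |x - ∑ j ∈ Finset.range k, (a j * Real.cos (j * x) + b j * Real.sin (j * x))| := hadj

lemma abs_Efun_eq (hk : 1 ≤ k) {i : ℕ} (hi : i < 2 * k) :
    Set.EqOn (fun x => |Efun k x|) (fun x => (-1 : ℝ) ^ (i + 1) * Efun k x)
      (Set.uIcc (nodeP k i) (nodeP k (i + 1))) := by
  intro x hx
  rw [Set.uIcc_of_le (nodeP_mono hk (by omega))] at hx
  dsimp only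
  rcases eq_or_lt_of_le hx.1 with heq | hlt
  · rcases Nat.eq_zero_or_pos i with rfl | hipos
    · rw [← heq, nodeP_zero]
      have hE : Efun k (-π) = -π := by rw [Efun_neg, Efun_pi]
      rw [hE, pow_one, abs_neg, abs_of_pos Real.pi_pos]
      ring
    · have hE : Efun k (nodeP k i) = 0 := Efun_node hk hipos (by omega)
      rw [← heq, hE]
      simp
  · rcases eq_or_lt_of_le hx.2 with heq2 | hlt2
    · rcases Nat.lt_or_ge (i + 1) (2 * k) with hlt3 | hge3
      · have hE : Efun k (nodeP k (i + 1)) = 0 := Efun_node hk (by omega) (by omega)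
        rw [heq2, hE]
        simp
      · have hie : i + 1 = 2 * k := by omega
        rw [heq2, hie, nodeP_last hk, Efun_pi, abs_of_pos Real.pi_pos]
        have : (-1 : ℝ) ^ (2 * k) = 1 := Even.neg_one_pow ⟨k, by ring⟩
        rw [this]
        ring
    · have hs := sign_final hk hi ⟨hlt, hlt2⟩
      have habs : |Efun k x| = |(-1 : ℝ) ^ (i + 1) * Efun k x| := by
        rw [abs_mul, abs_neg_one_pow_real, one_mul]
      rw [habs, abs_of_pos hs]

lemma pstar_upper (hk : 1 ≤ k) : ∫ x in (-π)..π, |Efun k x| = π ^ 2 / k := by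
  have hEc : Continuous (Efun k) := continuous_Efun
  have hadj : ∑ i ∈ Finset.range (2 * k), ∫ x in (nodeP k i)..(nodeP k (i + 1)), |Efun k x|
      = ∫ x in (nodeP k 0)..(nodeP k (2 * k)), |Efun k x| :=
    intervalIntegral.sum_integral_adjacent_intervals
      (fun i _ => (hEc.abs.intervalIntegrable _ _))
  rw [nodeP_zero, nodeP_last hk] at hadj
  rw [← hadj]
  have hpiece : ∀ i ∈ Finset.range (2 * k),
      (∫ x in (nodeP k i)..(nodeP k (i + 1)), |Efun k x|)
      = (-1 : ℝ) ^ (i + 1) * ∫ x in (nodeP k i)..(nodeP k (i + 1)), Efun k x := by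
    intro i hi
    rw [intervalIntegral.integral_congr (abs_Efun_eq hk (Finset.mem_range.mp hi)),
      intervalIntegral.integral_const_mul]
  rw [Finset.sum_congr rfl hpiece]
  have hkey := alt_int_trig hk (fun _ => 0) (cstar k)
  rw [← hkey]
  refine Finset.sum_congr rfl fun i _ => ?_
  congr 1
  refine intervalIntegral.integral_congr fun x _ => ?_
  show Efun k x = _
  unfold Efun pstar
  simp

lemma J1_eq_of_mem {x : ℝ} (h1 : -π < x) (h2 : x < π) : J1fun x = x := by
  have hr : round (x / (2 * π)) = 0 := by
    rw [round_eq_zero_iff]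
    constructor
    · rw [le_div_iff₀ (by positivity)]
      nlinarith [Real.pi_pos]
    · rw [div_lt_iff₀ (by positivity)]
      nlinarith [Real.pi_pos]
  unfold J1fun
  rw [hr]
  push_cast
  rw [mul_zero, sub_zero, if_neg (by linarith)]

lemma integral_J1 (p : ℝ → ℝ) :
    ∫ x in (-π)..π, |J1fun x - p x| = ∫ x in (-π)..π, |x - p x| := by
  apply intervalIntegral.integral_congr_ae
  have h0 : ∀ᵐ (x : ℝ), x ≠ π := by
    rw [MeasureTheory.ae_iff]
    have hs : {x : ℝ | ¬ x ≠ π} = {π} := by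
      ext y; simp
    rw [hs]
    exact Real.volume_singleton
  filter_upwards [h0] with x hx hxI
  rw [Set.uIoc_of_le (by linarith [Real.pi_pos] : (-π) ≤ π)] at hxI
  have hxlt : x < π := lt_of_le_of_ne hxI.2 hx
  rw [J1_eq_of_mem hxI.1 hxlt]

end SawtoothAux

/-- **L¹ distance from the sawtooth to trigonometric polynomials.**
The distance in `L¹(S¹, dx/2π)` from `J₁` to the space of trigonometric
polynomials of degree ≤ k−1 equals `π/(2k)`. -/
theorem sawtooth_l1_distance (k : ℕ) (hk : 1 ≤ k) :
    sInf ((fun p : ℝ → ℝ => (1 / (2 * π)) * ∫ x in (-π)..π, |J1fun x - p x|) ''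
        {p : ℝ → ℝ | IsTrigPoly (k - 1) p}) = π / (2 * k) := by
  have hkR : (k : ℝ) ≠ 0 := Nat.cast_ne_zero.mpr (by omega)
  have hk1 : k - 1 + 1 = k := by omega
  have hπ := Real.pi_pos
  have hlb : ∀ y ∈ ((fun p : ℝ → ℝ => (1 / (2 * π)) * ∫ x in (-π)..π, |J1fun x - p x|) ''
      {p : ℝ → ℝ | IsTrigPoly (k - 1) p}), π / (2 * k) ≤ y := by
    rintro y ⟨p, hp, rfl⟩
    obtain ⟨a, b, hab⟩ := hp
    rw [hk1] at hab
    dsimp only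
    have h1 : ∫ x in (-π)..π, |J1fun x - p x|
        = ∫ x in (-π)..π,
          |x - ∑ j ∈ Finset.range k, (a j * Real.cos (j * x) + b j * Real.sin (j * x))| := by
      rw [SawtoothAux.integral_J1 p]
      refine intervalIntegral.integral_congr fun x _ => ?_
      rw [hab x]
    rw [h1]
    have h2 := SawtoothAux.lower_bound hk a b
    calc π / (2 * k) = (1 / (2 * π)) * (π ^ 2 / k) := by field_simp
      _ ≤ (1 / (2 * π)) * ∫ x in (-π)..π,
          |x - ∑ j ∈ Finset.range k, (a j * Real.cos (j * x) + b j * Real.sin (j * x))| :=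
        mul_le_mul_of_nonneg_left h2 (by positivity)
  have hmem : π / (2 * k) ∈ ((fun p : ℝ → ℝ =>
      (1 / (2 * π)) * ∫ x in (-π)..π, |J1fun x - p x|) ''
      {p : ℝ → ℝ | IsTrigPoly (k - 1) p}) := by
    refine ⟨SawtoothAux.pstar k, ?_, ?_⟩
    · refine ⟨fun _ => 0, SawtoothAux.cstar k, fun x => ?_⟩
      rw [hk1]
      unfold SawtoothAux.pstar
      refine Finset.sum_congr rfl fun j _ => ?_
      ring
    · dsimp only
      rw [SawtoothAux.integral_J1 (SawtoothAux.pstar k)]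
      have h3 : ∫ x in (-π)..π, |x - SawtoothAux.pstar k x|
          = ∫ x in (-π)..π, |SawtoothAux.Efun k x| := rfl
      rw [h3, SawtoothAux.pstar_upper hk]
      field_simp
  apply le_antisymm
  · exact csInf_le ⟨π / (2 * k), fun y hy => hlb y hy⟩ hmem
  · exact le_csInf ⟨_, hmem⟩ hlb
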